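/- Suppose for each fixed x and all h \in H, \Delta C_{\ell_2}(h,x) \cdot 1[\Delta C_{\ell_2}(h,x) > \epsilon] \le s(\Delta C_{\ell_1}(h,x)) where s: \mathbb{R}_+ \to \mathbb{R} is concave. Then for all h \in H, R_{\ell_2}(h) - R^*_{\ell_2,H} + M_{\ell_2,H} \le s(R_{\ell_1}(h) - R^*_{\ell_1,H} + M_{\ell_1,H}) + \epsilon. -/

import Mathlib

open MeasureTheory

/-- A concave function on `Ici 0` has a supporting line at any interior point `t₀ > 0`. -/
lemma concave_exists_supporting_line (s : ℝ → ℝ) (hs : ConcaveOn ℝ (Set.Ici 0) s)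
    {t₀ : ℝ} (ht₀ : 0 < t₀) :
    ∃ c : ℝ, ∀ t, 0 ≤ t → s t ≤ s t₀ + c * (t - t₀) := by
  set S : Set ℝ := (fun z => (s z - s t₀) / (z - t₀)) '' Set.Ioi t₀ with hS
  have hne : S.Nonempty := ⟨_, Set.mem_image_of_mem _ (Set.mem_Ioi.2 (lt_add_one t₀))⟩
  have hbdd : BddAbove S := by
    refine ⟨(s t₀ - s 0) / (t₀ - 0), ?_⟩
    rintro y ⟨z, hz, rfl⟩
    exact hs.slope_anti_adjacent (le_refl (0:ℝ)) (le_of_lt (ht₀.trans hz)) ht₀ hz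
  refine ⟨sSup S, fun t ht => ?_⟩
  rcases lt_trichotomy t t₀ with hlt | heq | hgt
  · have hle : sSup S ≤ (s t₀ - s t) / (t₀ - t) := by
      refine csSup_le hne ?_
      rintro y ⟨z, hz, rfl⟩
      exact hs.slope_anti_adjacent ht (le_of_lt (ht₀.trans hz)) hlt hz
    have h2 : sSup S * (t₀ - t) ≤ s t₀ - s t := by
      have := (le_div_iff₀ (by linarith)).1 hle
      linarith
    have h3 : sSup S * (t - t₀) = -(sSup S * (t₀ - t)) := by ring
    linarith
  · subst heq; simp
  · have hmem : (s t - s t₀) / (t - t₀) ≤ sSup S :=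
      le_csSup hbdd (Set.mem_image_of_mem _ (Set.mem_Ioi.2 hgt))
    have h2 : s t - s t₀ ≤ sSup S * (t - t₀) := by
      have := (div_le_iff₀ (by linarith)).1 hmem
      linarith
    linarith

/-- Distribution-dependent concave `H`-consistency bound.  Here `ι` indexes the hypothesis
set `H`, `C₁ C₂ : ι → X → ℝ` are the conditional risks of the surrogate loss `ℓ₁` and the
target loss `ℓ₂`, `R_ℓ(h) = ∫ C_ℓ(h,x) dμ`, `R*_ℓ = ⨅_h R_ℓ(h)` and
`M_ℓ = R*_ℓ - ∫ (⨅_h C_ℓ(h,x)) dμ`.  If `s : ℝ₊ → ℝ` is concave and for all `h, x` we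
have `⟨ΔC₂(h,x)⟩_ε ≤ s(ΔC₁(h,x))` (with `⟨u⟩_ε = u·1[u>ε]`), then for all `h`,
`R₂(h) - R*₂ + M₂ ≤ s(R₁(h) - R*₁ + M₁) + ε`. -/
theorem distribution_dependent_concave_bound
    {X ι : Type*} [MeasurableSpace X] (μ : Measure X) [IsProbabilityMeasure μ]
    [Nonempty ι]
    (C₁ C₂ : ι → X → ℝ) (s : ℝ → ℝ) (ε : ℝ) (hε : 0 ≤ ε)
    (hs_ccv : ConcaveOn ℝ (Set.Ici 0) s)
    (hbdd₁ : ∀ x, BddBelow (Set.range fun h => C₁ h x))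
    (hbdd₂ : ∀ x, BddBelow (Set.range fun h => C₂ h x))
    (hint₁ : ∀ h, Integrable (fun x => C₁ h x) μ)
    (hint₂ : ∀ h, Integrable (fun x => C₂ h x) μ)
    (hinf₁ : Integrable (fun x => ⨅ h, C₁ h x) μ)
    (hinf₂ : Integrable (fun x => ⨅ h, C₂ h x) μ)
    (hRbdd₁ : BddBelow (Set.range fun h => ∫ x, C₁ h x ∂μ))
    (hRbdd₂ : BddBelow (Set.range fun h => ∫ x, C₂ h x ∂μ))
    (hmain : ∀ h x,
      (if ε < C₂ h x - ⨅ h', C₂ h' x then C₂ h x - ⨅ h', C₂ h' x else 0)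
        ≤ s (C₁ h x - ⨅ h', C₁ h' x)) :
    ∀ h : ι,
      (∫ x, C₂ h x ∂μ) - (⨅ h', ∫ x, C₂ h' x ∂μ)
          + ((⨅ h', ∫ x, C₂ h' x ∂μ) - ∫ x, (⨅ h', C₂ h' x) ∂μ)
        ≤ s ((∫ x, C₁ h x ∂μ) - (⨅ h', ∫ x, C₁ h' x ∂μ)
            + ((⨅ h', ∫ x, C₁ h' x ∂μ) - ∫ x, (⨅ h', C₁ h' x) ∂μ)) + ε := by
  intro h
  set g₁ : X → ℝ := fun x => C₁ h x - ⨅ h', C₁ h' x with hg₁def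
  set g₂ : X → ℝ := fun x => C₂ h x - ⨅ h', C₂ h' x with hg₂def
  have hg₁int : Integrable g₁ μ := (hint₁ h).sub hinf₁
  have hg₂int : Integrable g₂ μ := (hint₂ h).sub hinf₂
  have hg₁nonneg : ∀ x, 0 ≤ g₁ x := fun x =>
    sub_nonneg.2 (ciInf_le (hbdd₁ x) h)
  have key : ∀ x, g₂ x ≤ s (g₁ x) + ε := by
    intro x
    have h2 := hmain h x
    by_cases hc : ε < C₂ h x - ⨅ h', C₂ h' x
    · rw [if_pos hc] at h2
      simp only [hg₂def]
      linarith
    · rw [if_neg hc] at h2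
      push_neg at hc
      simp only [hg₂def]
      linarith
  have e₂ : (∫ x, C₂ h x ∂μ) - (⨅ h', ∫ x, C₂ h' x ∂μ)
      + ((⨅ h', ∫ x, C₂ h' x ∂μ) - ∫ x, (⨅ h', C₂ h' x) ∂μ) = ∫ x, g₂ x ∂μ := by
    rw [integral_sub (hint₂ h) hinf₂]; ring
  have e₁ : (∫ x, C₁ h x ∂μ) - (⨅ h', ∫ x, C₁ h' x ∂μ)
      + ((⨅ h', ∫ x, C₁ h' x ∂μ) - ∫ x, (⨅ h', C₁ h' x) ∂μ) = ∫ x, g₁ x ∂μ := by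
    rw [integral_sub (hint₁ h) hinf₁]; ring
  rw [e₁, e₂]
  set t₀ : ℝ := ∫ x, g₁ x ∂μ with ht₀def
  have ht₀ : 0 ≤ t₀ := integral_nonneg hg₁nonneg
  rcases ht₀.eq_or_lt with heq | hlt
  · -- t₀ = 0 : g₁ = 0 a.e.
    have hzero : g₁ =ᵐ[μ] 0 :=
      (integral_eq_zero_iff_of_nonneg hg₁nonneg hg₁int).1 heq.symm
    have hbound : g₂ ≤ᵐ[μ] fun _ => s 0 + ε := by
      filter_upwards [hzero] with x hx
      have := key x
      rw [hx] at this
      simpa using this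
    have : ∫ x, g₂ x ∂μ ≤ ∫ _, (s 0 + ε) ∂μ :=
      integral_mono_ae hg₂int (integrable_const _) hbound
    rw [integral_const, probReal_univ] at this
    simp only [ENNReal.toReal_one, one_smul] at this
    rw [← heq]
    exact this
  · obtain ⟨c, hc⟩ := concave_exists_supporting_line s hs_ccv hlt
    have hbound : ∀ x, g₂ x ≤ s t₀ + c * (g₁ x - t₀) + ε := fun x =>
      (key x).trans (by have := hc (g₁ x) (hg₁nonneg x); linarith)
    have haffint : Integrable (fun x => s t₀ + c * (g₁ x - t₀) + ε) μ :=
      (((hg₁int.sub (integrable_const t₀)).const_mul c).add (integrable_const (s t₀ + ε))).congr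
        (by filter_upwards with x; simp [Pi.sub_apply]; ring)
    have hle : ∫ x, g₂ x ∂μ ≤ ∫ x, (s t₀ + c * (g₁ x - t₀) + ε) ∂μ :=
      integral_mono hg₂int haffint hbound
    have hcalc : ∫ x, (s t₀ + c * (g₁ x - t₀) + ε) ∂μ = s t₀ + ε := by
      have h1 : Integrable (fun x => c * (g₁ x - t₀)) μ :=
        (hg₁int.sub (integrable_const t₀)).const_mul c
      rw [show (fun x => s t₀ + c * (g₁ x - t₀) + ε)
            = fun x => c * (g₁ x - t₀) + (s t₀ + ε) by funext x; ring]
      rw [integral_add h1 (integrable_const _), integral_const, probReal_univ,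
        integral_const_mul, integral_sub hg₁int (integrable_const t₀),
        integral_const, probReal_univ]
      simp [← ht₀def]
    rw [hcalc] at hle
    exact hle
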